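/- Let T be a nonspecial ω₁-tree with the property that for every X ⊆ ω₁, T↾X ∈ NS^T if and only if X is nonstationary in ω₁. Then ◊ and ◊_T are equivalent. -/

import Mathlib

open Set

/-- The first uncountable ordinal `ω₁`. -/
noncomputable def omega1 : Ordinal := Ordinal.omega 1

open Ordinal Cardinal in
lemma lt_omega1_iff {o : Ordinal} : o < omega1 ↔ o.card ≤ ℵ₀ := by
  rw [show omega1 = (Cardinal.aleph 1).ord from (Cardinal.ord_aleph 1).symm,
    Cardinal.lt_ord]
  constructor
  · intro h
    have : (1 : Ordinal) = Order.succ 0 := by simp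
    rw [this, Cardinal.aleph_succ, Cardinal.aleph_zero, Order.lt_succ_iff] at h
    exact h
  · intro h
    exact h.trans_lt Cardinal.aleph0_lt_aleph_one

open Ordinal Cardinal in
lemma omega_mul_add_lt {ξ : Ordinal} (hξ : ξ < omega1) (n : ℕ) :
    Ordinal.omega0 * ξ + n < omega1 := by
  rw [lt_omega1_iff] at hξ ⊢
  rw [Ordinal.card_add, Ordinal.card_mul]
  simp only [Ordinal.card_omega0, Ordinal.card_nat]
  have h1 : ℵ₀ * ξ.card ≤ ℵ₀ := by
    rcases eq_or_ne ξ.card 0 with h | h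
    · simp [h]
    · exact (Cardinal.mul_le_max_of_aleph0_le_left le_rfl).trans (by simp [hξ])
  have h2 : (n : Cardinal) ≤ ℵ₀ := (Cardinal.nat_lt_aleph0 n).le
  calc ℵ₀ * ξ.card + n ≤ ℵ₀ + ℵ₀ := add_le_add h1 h2
  _ = ℵ₀ := by simp

open Ordinal Cardinal in
lemma sup_lt_omega1 (f : ℕ → Ordinal) (hf : ∀ n, f n < omega1) : iSup f < omega1 := by
  exact Ordinal.iSup_lt_omega_one hf

open Ordinal in
lemma omega_mul_add_inj {ξ ξ' : Ordinal} {m m' : ℕ}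
    (h : Ordinal.omega0 * ξ + m = Ordinal.omega0 * ξ' + m') : ξ = ξ' ∧ m = m' := by
  have key : ∀ a b : Ordinal, a < b → ∀ k k' : ℕ,
      Ordinal.omega0 * a + k ≠ Ordinal.omega0 * b + k' := by
    intro a b hab k k' heq
    have h1 : Ordinal.omega0 * a + k < Ordinal.omega0 * (a+1) := by
      rw [Ordinal.add_one_eq_succ, Ordinal.mul_succ]
      exact add_lt_add_right (Ordinal.nat_lt_omega0 k) _
    have h2 : Ordinal.omega0 * (a+1) ≤ Ordinal.omega0 * b := by
      apply mul_le_mul_right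
      rwa [Ordinal.add_one_eq_succ, Order.succ_le_iff]
    have : Ordinal.omega0 * a + k < Ordinal.omega0 * b + k' :=
      h1.trans_le (h2.trans le_self_add)
    rw [heq] at this
    exact lt_irrefl _ this
  rcases lt_trichotomy ξ ξ' with hl | he | hl
  · exact absurd h (key _ _ hl _ _)
  · subst he
    refine ⟨rfl, ?_⟩
    have := add_left_cancel h
    exact_mod_cast this
  · exact absurd h.symm (key _ _ hl _ _)


section TreeDefs

variable {T : Type*} [PartialOrder T]

/-- In a tree, the set of strict predecessors of any node is linearly ordered. -/
def PredsChain (T : Type*) [PartialOrder T] : Prop :=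
  ∀ t : T, IsChain (· ≤ ·) {s : T | s < t}

/-- `ht` is *the* height function of the tree: it is strictly monotone on comparable pairs and
the heights of the strict predecessors of `t` are exactly the ordinals below `ht t`; together
with `PredsChain` this says that the set `t↓` of strict predecessors of `t` is well-ordered
with order type `ht t`. -/
def IsHeightFun (ht : T → Ordinal) : Prop :=
  (∀ s t : T, s < t → ht s < ht t) ∧
  ∀ t : T, ∀ o : Ordinal, o < ht t → ∃ s : T, s < t ∧ ht s = o

/-- The tree has height `ω₁`: every node has height `< ω₁` and every countable ordinal is the
height of some node. -/
def HeightOmega1 (ht : T → Ordinal) : Prop :=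
  (∀ t : T, ht t < omega1) ∧ ∀ o : Ordinal, o < omega1 → ∃ t : T, ht t = o

/-- All levels of the tree are countable. -/
def CountableLevels (ht : T → Ordinal) : Prop :=
  ∀ o : Ordinal, {t : T | ht t = o}.Countable

/-- A tree of height `ω₁` is well-pruned if every node has successors in all later levels. -/
def WellPruned (ht : T → Ordinal) : Prop :=
  ∀ o o' : Ordinal, o < o' → o' < omega1 →
    ∀ s : T, ht s = o → ∃ t : T, s < t ∧ ht t = o'

/-- A special subset of a tree: a union of countably many antichains. -/
def IsSpecialSet (U : Set T) : Prop :=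
  ∃ A : ℕ → Set T, (∀ n : ℕ, IsAntichain (· ≤ ·) (A n)) ∧ U ⊆ ⋃ n, A n

/-- Membership in the ideal `NS^T`: there is a regressive map on `B` all of whose fibers
are special. -/
def InNS [OrderBot T] (B : Set T) : Prop :=
  ∃ f : T → T, (∀ t ∈ B, t ≠ ⊥ → f t < t) ∧
    ∀ t : T, IsSpecialSet {s : T | s ∈ B ∧ f s = t}

/-- The diamond principle `◊_T` for a tree `T`. -/
def DiamondTree (T : Type*) [PartialOrder T] [OrderBot T] : Prop :=
  ∃ D : T → Set T, (∀ t : T, D t ⊆ Set.Iio t) ∧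
    ∀ X : Set T, ¬ InNS {t : T | X ∩ Set.Iio t = D t}

lemma IsSpecialSet_mono {U V : Set T} (h : U ⊆ V) (hV : IsSpecialSet V) :
    IsSpecialSet U := by
  obtain ⟨A, hA, hsub⟩ := hV
  exact ⟨A, hA, fun x hx => hsub (h hx)⟩

lemma InNS_mono [OrderBot T] {B B' : Set T} (h : B ⊆ B') (hB' : InNS B') : InNS B := by
  obtain ⟨f, hreg, hfib⟩ := hB'
  exact ⟨f, fun t htB => hreg t (h htB),
    fun t => IsSpecialSet_mono (U := {s | s ∈ B ∧ f s = t}) (V := {s | s ∈ B' ∧ f s = t})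
      (fun s hs => ⟨h hs.1, hs.2⟩) (hfib t)⟩


end TreeDefs

/-- Club subsets of `ω₁`: closed and unbounded in `ω₁`. -/
def IsClubIn (C : Set Ordinal) : Prop :=
  C ⊆ Set.Iio omega1 ∧
  (∀ o : Ordinal, o < omega1 → ∃ b ∈ C, o < b) ∧
  ∀ o : Ordinal, o < omega1 → (C ∩ Set.Iio o).Nonempty →
    IsLUB (C ∩ Set.Iio o) o → o ∈ C

/-- Stationary subsets of `ω₁`: sets meeting every club. -/
def IsStationaryIn (S : Set Ordinal) : Prop :=
  ∀ C : Set Ordinal, IsClubIn C → (S ∩ C).Nonempty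

open Cardinal in
lemma ordinal_lt_succ (o : Ordinal) : o < o + 1 := by
  rw [Ordinal.add_one_eq_succ]
  exact Order.lt_succ o

open Cardinal in
lemma succ_lt_omega1 {o : Ordinal} (h : o < omega1) : o + 1 < omega1 := by
  rw [lt_omega1_iff] at h ⊢
  rw [Ordinal.card_add, Ordinal.card_one]
  calc o.card + 1 ≤ ℵ₀ + ℵ₀ := add_le_add h (Cardinal.one_le_aleph0.trans le_rfl)
  _ = ℵ₀ := by simp

open Cardinal in
lemma omega_mul_add_omega_lt {p : Ordinal} (hp : p < omega1) :
    Ordinal.omega0 * p + Ordinal.omega0 < omega1 := by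
  have : Ordinal.omega0 * p + Ordinal.omega0 = Ordinal.omega0 * (p + 1) := by
    rw [Ordinal.add_one_eq_succ, Ordinal.mul_succ]
  rw [this, lt_omega1_iff, Ordinal.card_mul, Ordinal.card_omega0, Ordinal.card_add,
    Ordinal.card_one]
  rw [lt_omega1_iff] at hp
  have h1 : p.card + 1 ≤ ℵ₀ := by
    calc p.card + 1 ≤ ℵ₀ + ℵ₀ := add_le_add hp (Cardinal.one_le_aleph0.trans le_rfl)
    _ = ℵ₀ := by simp
  rcases eq_or_ne (p.card + 1) 0 with h | h
  · simp [h]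
  · exact (Cardinal.mul_le_max_of_aleph0_le_left le_rfl).trans (by simp [h1])

lemma mem_club_of_limitPoint {C : Set Ordinal} (hC : IsClubIn C) {s : Ordinal}
    (hs : s < omega1) (h0 : 0 < s)
    (hlim : ∀ ξ, ξ < s → ∃ c ∈ C, ξ < c ∧ c < s) : s ∈ C := by
  obtain ⟨c0, hc0, _, hc0s⟩ := hlim 0 h0
  apply hC.2.2 s hs ⟨c0, hc0, hc0s⟩
  constructor
  · rintro x ⟨_, hx⟩
    exact le_of_lt hx
  · intro b hb
    by_contra hbs
    push_neg at hbs
    obtain ⟨c, hcC, hbc, hcs⟩ := hlim b hbs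
    exact absurd (hb ⟨hcC, hcs⟩) (not_le.mpr hbc)

/-- generic recursive sequence builder below ω₁ -/
lemma seq_builder (o : Ordinal) (ho : o < omega1) (P : ℕ → Ordinal → Prop)
    (step : ∀ p, p < omega1 → ∀ j : ℕ, ∃ q, P j q ∧ p < q ∧ q < omega1) :
    ∃ x : ℕ → Ordinal, x 0 = o + 1 ∧ (∀ j, x j < omega1) ∧ (∀ j, x j < x (j+1)) ∧
      ∀ j, P j (x (j+1)) := by
  classical
  let g : Ordinal → ℕ → Ordinal := fun p j =>
    if h : p < omega1 then (step p h j).choose else 0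
  let x : ℕ → Ordinal := fun j => Nat.rec (o + 1) (fun j prev => g prev j) j
  have hx0 : x 0 = o + 1 := rfl
  have hxs : ∀ j, x (j+1) = g (x j) j := fun j => rfl
  have hlt : ∀ j, x j < omega1 ∧ (j ≠ 0 → ∀ i, j = i + 1 → P i (x j) ∧ x i < x j) := by
    intro j
    induction j with
    | zero => exact ⟨hx0 ▸ succ_lt_omega1 ho, by simp⟩
    | succ i ih =>
      have hxi : x i < omega1 := ih.1
      have hg : x (i+1) = (step (x i) hxi i).choose := by
        rw [hxs i]; simp only [g, dif_pos hxi]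
      obtain ⟨hP, hlt', hlt1⟩ := (step (x i) hxi i).choose_spec
      refine ⟨hg ▸ hlt1, fun _ i' hi' => ?_⟩
      have : i' = i := by omega
      subst this
      exact ⟨hg ▸ hP, hg ▸ hlt'⟩
  refine ⟨x, hx0, fun j => (hlt j).1, fun j => ((hlt (j+1)).2 (by omega) j rfl).2,
    fun j => ((hlt (j+1)).2 (by omega) j rfl).1⟩

lemma club_iInter (C : ℕ → Set Ordinal) (h : ∀ n, IsClubIn (C n)) :
    IsClubIn (⋂ n, C n) := by
  refine ⟨fun x hx => (h 0).1 (Set.mem_iInter.mp hx 0), ?_, ?_⟩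
  · -- unbounded
    intro o ho
    obtain ⟨x, hx0, hxlt, hxmono, hxP⟩ := seq_builder o ho
      (fun j q => q ∈ C (Nat.unpair j).1)
      (fun p hp j => by
        obtain ⟨b, hb, hpb⟩ := (h (Nat.unpair j).1).2.1 p hp
        exact ⟨b, hb, hpb, (h _).1 hb⟩)
    have hmono : StrictMono x := strictMono_nat_of_lt_succ hxmono
    have hbdd : BddAbove (Set.range x) := Ordinal.bddAbove_range x
    set s := iSup x with hs
    have hle : ∀ j, x j ≤ s := fun j => le_ciSup hbdd j
    have hslt : s < omega1 := sup_lt_omega1 x hxlt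
    have hlim : ∀ n : ℕ, ∀ ξ, ξ < s → ∃ c ∈ C n, ξ < c ∧ c < s := by
      intro n ξ hξ
      obtain ⟨j, hj⟩ := (lt_ciSup_iff hbdd).mp hξ
      set j' := Nat.pair n (j + 1) with hj'
      have hjj' : j ≤ j' := le_trans (by omega) (Nat.right_le_pair n (j+1))
      refine ⟨x (j' + 1), ?_, ?_, ?_⟩
      · have := hxP j'
        rwa [hj', Nat.unpair_pair] at this
      · exact lt_of_lt_of_le hj (le_trans (hmono.monotone hjj') (le_of_lt (hxmono j')))
      · exact lt_of_lt_of_le (hxmono (j'+1)) (hle (j'+2))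
    have h0s : 0 < s := lt_of_le_of_lt (zero_le (a := o))
      (lt_of_lt_of_le (hx0 ▸ ordinal_lt_succ o) (hx0 ▸ hle 0))
    refine ⟨s, Set.mem_iInter.mpr (fun n =>
      mem_club_of_limitPoint (h n) hslt h0s (hlim n)), ?_⟩
    exact lt_of_lt_of_le (hx0 ▸ ordinal_lt_succ o) (hx0 ▸ hle 0)
  · -- closed
    intro o ho hne hlub
    obtain ⟨c, hc, hco⟩ := hne
    refine Set.mem_iInter.mpr (fun n => mem_club_of_limitPoint (h n) ho
      (lt_of_le_of_lt (zero_le (a := c)) hco) ?_)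
    intro ξ hξ
    have : ¬ (ξ ∈ upperBounds ((⋂ n, C n) ∩ Set.Iio o)) := by
      intro hub
      exact absurd (hlub.2 hub) (not_le.mpr hξ)
    rw [upperBounds, Set.mem_setOf_eq] at this
    push_neg at this
    obtain ⟨d, ⟨hd, hdo⟩, hξd⟩ := this
    exact ⟨d, Set.mem_iInter.mp hd n, hξd, hdo⟩

lemma club_inter {C C' : Set Ordinal} (hC : IsClubIn C) (hC' : IsClubIn C') :
    IsClubIn (C ∩ C') := by
  have := club_iInter (fun n => Nat.rec C (fun _ _ => C') n)
    (fun n => by cases n with | zero => exact hC | succ m => exact hC')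
  have heq : (⋂ n, (fun n => Nat.rec C (fun _ _ => C') n) n) = C ∩ C' := by
    ext z
    simp only [Set.mem_iInter, Set.mem_inter_iff]
    constructor
    · intro hz; exact ⟨hz 0, hz 1⟩
    · rintro ⟨h1, h2⟩ n; cases n with | zero => exact h1 | succ m => exact h2
  rwa [heq] at this

lemma stationary_inter_club {S C : Set Ordinal} (hS : IsStationaryIn S)
    (hC : IsClubIn C) : IsStationaryIn (S ∩ C) := by
  intro C' hC'
  obtain ⟨x, hxS, hxC, hxC'⟩ := hS (C ∩ C') (club_inter hC hC')
  exact ⟨x, ⟨hxS, hxC⟩, hxC'⟩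

/-- The club of "closure points" of the coding map. -/
def Ccl : Set Ordinal :=
  {α | α < omega1 ∧ ∀ ξ, ξ < α → Ordinal.omega0 * ξ + Ordinal.omega0 ≤ α}

lemma Ccl_club : IsClubIn Ccl := by
  refine ⟨fun x hx => hx.1, ?_, ?_⟩
  · intro o ho
    let f : Ordinal → Ordinal := fun p => Ordinal.omega0 * p + Ordinal.omega0
    let x : ℕ → Ordinal := fun j => Nat.rec (o+1) (fun _ p => f p) j
    have hx0 : x 0 = o + 1 := rfl
    have hxs : ∀ j, x (j+1) = Ordinal.omega0 * x j + Ordinal.omega0 := fun j => rfl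
    have hxlt : ∀ j, x j < omega1 := by
      intro j
      induction j with
      | zero => exact succ_lt_omega1 ho
      | succ i ih => exact (hxs i) ▸ omega_mul_add_omega_lt ih
    have hxmono : ∀ j, x j < x (j+1) := by
      intro j
      rw [hxs j]
      calc x j ≤ Ordinal.omega0 * x j := by
            conv_lhs => rw [← one_mul (x j)]
            exact mul_le_mul_left (Order.one_le_iff_pos.mpr Ordinal.omega0_pos) _
      _ = Ordinal.omega0 * x j + 0 := by rw [add_zero]
      _ < Ordinal.omega0 * x j + Ordinal.omega0 := by
            exact add_lt_add_right Ordinal.omega0_pos _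
    have hmono : StrictMono x := strictMono_nat_of_lt_succ hxmono
    have hbdd : BddAbove (Set.range x) := Ordinal.bddAbove_range x
    set s := iSup x with hs
    have hle : ∀ j, x j ≤ s := fun j => le_ciSup hbdd j
    have hslt : s < omega1 := sup_lt_omega1 x hxlt
    refine ⟨s, ⟨hslt, ?_⟩, lt_of_lt_of_le (hx0 ▸ ordinal_lt_succ o) (hx0 ▸ hle 0)⟩
    intro ξ hξ
    obtain ⟨j, hj⟩ := (lt_ciSup_iff hbdd).mp hξ
    calc Ordinal.omega0 * ξ + Ordinal.omega0
        ≤ Ordinal.omega0 * x j + Ordinal.omega0 :=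
          add_le_add_left (mul_le_mul_right hj.le _) _
    _ = x (j+1) := (hxs j).symm
    _ ≤ s := hle (j+1)
  · intro o ho hne hlub
    obtain ⟨c, hc, hco⟩ := hne
    refine ⟨ho, fun ξ hξ => ?_⟩
    have : ¬ (ξ ∈ upperBounds (Ccl ∩ Set.Iio o)) := by
      intro hub
      exact absurd (hlub.2 hub) (not_le.mpr hξ)
    rw [upperBounds, Set.mem_setOf_eq] at this
    push_neg at this
    obtain ⟨d, ⟨hd, hdo⟩, hξd⟩ := this
    exact le_trans (hd.2 ξ (hξd)) (le_of_lt hdo)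


/-- The diamond principle `◊(S)` for `S ⊆ ω₁`;  `◊` is `DiamondOn (Set.Iio omega1)`. -/
def DiamondOn (S : Set Ordinal) : Prop :=
  ∃ D : Ordinal → Set Ordinal, (∀ o ∈ S, D o ⊆ Set.Iio o) ∧
    ∀ X : Set Ordinal, X ⊆ Set.Iio omega1 →
      IsStationaryIn {o ∈ S | X ∩ Set.Iio o = D o}

section UniverseTransfer

universe u v

open Ordinal in
lemma lift_omega1 : Ordinal.lift.{v, u} omega1 = omega1 := by
  unfold omega1
  rw [Ordinal.lift_omega, Ordinal.lift_one]

lemma club_preimage_lift {C : Set Ordinal.{max u v}} (hC : IsClubIn C) :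
    IsClubIn {a : Ordinal.{u} | Ordinal.lift.{v, u} a ∈ C} := by
  refine ⟨?_, ?_, ?_⟩
  · intro a ha
    have := hC.1 ha
    rw [Set.mem_Iio, ← lift_omega1.{u,v}, Ordinal.lift_lt] at *
    exact this
  · intro o ho
    have ho' : Ordinal.lift.{v,u} o < omega1 := by
      rw [← lift_omega1.{u,v}, Ordinal.lift_lt]; exact ho
    obtain ⟨b', hb', hob'⟩ := hC.2.1 _ ho'
    have hb'lt : b' ≤ Ordinal.lift.{v,u} omega1 := by
      rw [lift_omega1.{u,v}]; exact (hC.1 hb').le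
    obtain ⟨b, rfl⟩ := Ordinal.mem_range_lift_of_le hb'lt
    exact ⟨b, hb', Ordinal.lift_lt.mp hob'⟩
  · intro o ho hne hlub
    have ho' : Ordinal.lift.{v,u} o < omega1 := by
      rw [← lift_omega1.{u,v}, Ordinal.lift_lt]; exact ho
    have hne' : (C ∩ Set.Iio (Ordinal.lift.{v,u} o)).Nonempty := by
      obtain ⟨c, hc1, hc2⟩ := hne
      exact ⟨Ordinal.lift.{v,u} c, hc1, Ordinal.lift_lt.mpr hc2⟩
    refine hC.2.2 _ ho' hne' ⟨?_, ?_⟩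
    · rintro c' ⟨_, hc'⟩
      exact le_of_lt hc'
    · intro b' hb'
      by_contra hcon
      push_neg at hcon
      obtain ⟨b, rfl⟩ := Ordinal.mem_range_lift_of_le hcon.le
      have hbub : b ∈ upperBounds ({a : Ordinal.{u} | Ordinal.lift.{v,u} a ∈ C} ∩ Set.Iio o) := by
        rintro x ⟨hx1, hx2⟩
        have := hb' ⟨hx1, Ordinal.lift_lt.mpr hx2⟩
        exact Ordinal.lift_le.mp this
      exact absurd (Ordinal.lift_le.mpr (hlub.2 hbub)) (not_le.mpr hcon)

lemma club_image_lift {C : Set Ordinal.{u}} (hC : IsClubIn C) :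
    IsClubIn (Ordinal.lift.{v, u} '' C) := by
  refine ⟨?_, ?_, ?_⟩
  · rintro _ ⟨a, ha, rfl⟩
    rw [Set.mem_Iio, ← lift_omega1.{u,v}, Ordinal.lift_lt]
    exact hC.1 ha
  · intro o' ho'
    have : o' ≤ Ordinal.lift.{v,u} omega1 := by rw [lift_omega1.{u,v}]; exact ho'.le
    obtain ⟨o, rfl⟩ := Ordinal.mem_range_lift_of_le this
    have ho : o < omega1 := by
      rwa [← lift_omega1.{u,v}, Ordinal.lift_lt] at ho'
    obtain ⟨b, hb, hob⟩ := hC.2.1 o ho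
    exact ⟨Ordinal.lift.{v,u} b, ⟨b, hb, rfl⟩, Ordinal.lift_lt.mpr hob⟩
  · intro o' ho' hne' hlub'
    have : o' ≤ Ordinal.lift.{v,u} omega1 := by rw [lift_omega1.{u,v}]; exact ho'.le
    obtain ⟨o, rfl⟩ := Ordinal.mem_range_lift_of_le this
    have ho : o < omega1 := by
      rwa [← lift_omega1.{u,v}, Ordinal.lift_lt] at ho'
    have hne : (C ∩ Set.Iio o).Nonempty := by
      obtain ⟨c', ⟨c, hc, rfl⟩, hc2⟩ := hne'
      exact ⟨c, hc, Ordinal.lift_lt.mp hc2⟩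
    have hlub : IsLUB (C ∩ Set.Iio o) o := by
      constructor
      · rintro c ⟨_, hc⟩
        exact le_of_lt hc
      · intro b hb
        have : Ordinal.lift.{v,u} b ∈ upperBounds
            (Ordinal.lift.{v,u} '' C ∩ Set.Iio (Ordinal.lift.{v,u} o)) := by
          rintro _ ⟨⟨c, hc, rfl⟩, hc2⟩
          exact Ordinal.lift_le.mpr (hb ⟨hc, Ordinal.lift_lt.mp hc2⟩)
        exact Ordinal.lift_le.mp (hlub'.2 this)
    exact ⟨o, hC.2.2 o ho hne hlub, rfl⟩

lemma diamondOn_lift_up :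
    DiamondOn.{u} (Set.Iio omega1) → DiamondOn.{max u v} (Set.Iio omega1) := by
  classical
  rintro ⟨D, hDsub, hD⟩
  set L := Ordinal.lift.{v, u} with hL
  refine ⟨fun o' => if h : ∃ o, L o = o' then L '' (D h.choose) else ∅, ?_, ?_⟩
  · intro o' ho' x hx
    have hx' : x ∈ (if h : ∃ o, L o = o' then L '' (D h.choose) else ∅) := hx
    clear hx
    rename' hx' => hx
    split_ifs at hx with h
    · obtain ⟨a, haD, rfl⟩ := hx
      have hcho : h.choose ∈ Set.Iio (omega1 : Ordinal.{u}) := by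
        rw [Set.mem_Iio, ← Ordinal.lift_lt.{v,u}, lift_omega1.{u,v},
          show Ordinal.lift.{v,u} h.choose = o' from h.choose_spec]
        exact ho'
      have := hDsub h.choose hcho haD
      rw [Set.mem_Iio] at this ⊢
      calc L a < L h.choose := Ordinal.lift_lt.mpr this
      _ = o' := h.choose_spec
    · exact absurd hx (Set.notMem_empty x)
  · intro X' hX'
    set X : Set Ordinal.{u} := {a | L a ∈ X'} with hX
    have hXsub : X ⊆ Set.Iio omega1 := by
      intro a ha
      have := hX' ha
      rwa [Set.mem_Iio, ← lift_omega1.{u,v}, Ordinal.lift_lt] at this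
    intro C' hC'
    obtain ⟨o, ⟨ho1, ho2⟩, hoC⟩ := hD X hXsub _ (club_preimage_lift.{u,v} hC')
    refine ⟨L o, ⟨?_, ?_⟩, hoC⟩
    · rw [Set.mem_Iio, ← lift_omega1.{u,v}, Ordinal.lift_lt]
      exact ho1
    · have hchoose : (⟨o, rfl⟩ : ∃ a, L a = L o).choose = o :=
        Ordinal.lift_inj.mp (⟨o, rfl⟩ : ∃ a, L a = L o).choose_spec
      show X' ∩ Set.Iio (L o) = if h : ∃ a, L a = L o then L '' (D h.choose) else ∅
      rw [dif_pos (⟨o, rfl⟩ : ∃ a, L a = L o), hchoose, ← ho2]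
      ext x'
      constructor
      · rintro ⟨hx1, hx2⟩
        have : x' ≤ L o := le_of_lt hx2
        obtain ⟨x, rfl⟩ := Ordinal.mem_range_lift_of_le this
        exact ⟨x, ⟨hx1, Ordinal.lift_lt.mp hx2⟩, rfl⟩
      · rintro ⟨x, ⟨hx1, hx2⟩, rfl⟩
        exact ⟨hx1, Ordinal.lift_lt.mpr hx2⟩

lemma diamondOn_lift_down :
    DiamondOn.{max u v} (Set.Iio omega1) → DiamondOn.{u} (Set.Iio omega1) := by
  rintro ⟨D', hD'sub, hD'⟩
  set L := Ordinal.lift.{v, u} with hL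
  refine ⟨fun o => {a | L a ∈ D' (L o)}, ?_, ?_⟩
  · intro o ho a ha
    have hmem : L o ∈ Set.Iio (omega1 : Ordinal.{max u v}) := by
      rw [Set.mem_Iio, ← lift_omega1.{u,v}, Ordinal.lift_lt]
      exact ho
    have := hD'sub (L o) hmem ha
    rw [Set.mem_Iio] at this ⊢
    exact Ordinal.lift_lt.mp this
  · intro X hX
    set X' : Set Ordinal.{max u v} := L '' X with hX'def
    have hX' : X' ⊆ Set.Iio omega1 := by
      rintro _ ⟨a, ha, rfl⟩
      rw [Set.mem_Iio, ← lift_omega1.{u,v}, Ordinal.lift_lt]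
      exact hX ha
    intro C hC
    obtain ⟨o', ⟨ho1, ho2⟩, hoC⟩ := hD' X' hX' _ (club_image_lift.{u,v} hC)
    obtain ⟨o, hoC', rfl⟩ := hoC
    refine ⟨o, ⟨?_, ?_⟩, hoC'⟩
    · rw [Set.mem_Iio, ← lift_omega1.{u,v}, Ordinal.lift_lt] at ho1
      exact ho1
    · ext a
      constructor
      · rintro ⟨ha1, ha2⟩
        have hmm : L a ∈ X' ∩ Set.Iio (L o) := ⟨⟨a, ha1, rfl⟩, Ordinal.lift_lt.mpr ha2⟩
        rw [ho2] at hmm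
        exact hmm
      · intro ha
        have hmm : L a ∈ D' (L o) := ha
        rw [← ho2] at hmm
        obtain ⟨⟨b, hb, hba⟩, hlt⟩ := hmm
        exact ⟨Ordinal.lift_inj.mp hba ▸ hb, Ordinal.lift_lt.mp hlt⟩

lemma diamondOn_univ_iff :
    DiamondOn.{u} (Set.Iio omega1) ↔ DiamondOn.{v} (Set.Iio omega1) :=
  ⟨fun h => diamondOn_lift_down.{v, u} (diamondOn_lift_up.{u, v} h),
   fun h => diamondOn_lift_down.{u, v} (diamondOn_lift_up.{v, u} h)⟩

end UniverseTransfer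

/-- the pairing on indices with diagonal fixed points -/
def pind (n m : ℕ) : ℕ := if m = 2*n+1 then m else 2 * (Nat.pair n m) + 2

lemma pind_inj {n m n' m' : ℕ} (h : pind n m = pind n' m') : n = n' ∧ m = m' := by
  unfold pind at h
  by_cases h1 : m = 2*n+1 <;> by_cases h2 : m' = 2*n'+1
  · rw [if_pos h1, if_pos h2] at h; omega
  · rw [if_pos h1, if_neg h2] at h; omega
  · rw [if_neg h1, if_pos h2] at h; omega
  · rw [if_neg h1, if_neg h2] at h
    exact Nat.pair_eq_pair.mp (by omega : Nat.pair n m = Nat.pair n' m')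

lemma pind_fixed (n : ℕ) : pind n (2*n+1) = 2*n+1 := by simp [pind]

universe uT uO in
lemma stmt16_main {T : Type uT} [PartialOrder T] [OrderBot T]
    (ht : T → Ordinal.{uO})
    (hht : IsHeightFun ht) (hΩ : HeightOmega1 ht) (hlev : CountableLevels ht)
    (hchar : ∀ X : Set Ordinal.{uO}, X ⊆ Set.Iio omega1 →
      (InNS {t : T | ht t ∈ X} ↔ ¬ IsStationaryIn X)) :
    DiamondOn (Set.Iio (omega1 : Ordinal.{uO})) ↔ DiamondTree T := by
  classical
  constructor
  · -- ◊ implies ◊_T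
    rintro ⟨Dd, hDdsub, hDd⟩
    choose G hGinj using fun o : Ordinal => Set.countable_iff_exists_injOn.mp (hlev o)
    set e : T → Ordinal := fun t => Ordinal.omega0 * ht t + G (ht t) t with he
    have he_lt : ∀ t, e t < omega1 := fun t => omega_mul_add_lt (hΩ.1 t) _
    have he_inj : Function.Injective e := by
      intro t t' hett'
      obtain ⟨h1, h2⟩ := omega_mul_add_inj hett'
      rw [← h1] at h2
      exact hGinj (ht t) rfl h1.symm h2
    refine ⟨fun t => {s | s < t ∧ e s ∈ Dd (ht t)}, fun t s hs => hs.1, ?_⟩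
    intro X hInNS
    set X' : Set Ordinal := e '' X with hX'def
    have hX' : X' ⊆ Set.Iio omega1 := by
      rintro _ ⟨u, _, rfl⟩; exact he_lt u
    have hstat := stationary_inter_club (hDd X' hX') Ccl_club
    set S := {o ∈ Set.Iio omega1 | X' ∩ Set.Iio o = Dd o} ∩ Ccl with hSdef
    have hsub : {t : T | ht t ∈ S} ⊆ {t : T | X ∩ Set.Iio t = {s | s < t ∧ e s ∈ Dd (ht t)}} := by
      intro t hts
      obtain ⟨⟨hα1, heq⟩, hcl⟩ := hts
      ext s
      simp only [Set.mem_inter_iff, Set.mem_Iio, Set.mem_setOf_eq]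
      constructor
      · rintro ⟨hsX, hst⟩
        refine ⟨hst, ?_⟩
        rw [← heq]
        refine ⟨⟨s, hsX, rfl⟩, ?_⟩
        have hlt : ht s < ht t := hht.1 s t hst
        calc e s < Ordinal.omega0 * ht s + Ordinal.omega0 :=
              add_lt_add_right (Ordinal.nat_lt_omega0 _) _
        _ ≤ ht t := hcl.2 (ht s) hlt
      · rintro ⟨hst, hsD⟩
        rw [← heq] at hsD
        obtain ⟨⟨u, huX, hue⟩, _⟩ := hsD
        exact ⟨he_inj hue ▸ huX, hst⟩
    have hSIio : S ⊆ Set.Iio omega1 := fun o hoS => hoS.1.1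
    exact absurd ((hchar S hSIio).mp (InNS_mono hsub hInNS)) (not_not.mpr hstat)
  · -- ◊_T implies ◊
    rintro ⟨Dt, hDtsub, hDt⟩
    have hEex : ∀ o : Ordinal, ∃ f : ℕ → T, o < omega1 → {t : T | ht t = o} = Set.range f := by
      intro o
      by_cases hoo : o < omega1
      · obtain ⟨t, htt⟩ := hΩ.2 o hoo
        obtain ⟨f, hf⟩ := (hlev o).exists_eq_range ⟨t, htt⟩
        exact ⟨f, fun _ => hf⟩
      · exact ⟨fun _ => ⊥, fun h => absurd h hoo⟩
    choose E hE using hEex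
    -- the guessing family lemma
    have hguess : ∀ X : Set Ordinal, IsStationaryIn
        {α | α < omega1 ∧ ∃ n : ℕ, X ∩ Set.Iio α = ht '' (Dt (E α n))} := by
      intro X
      set Y : Set T := {t | ht t ∈ X} with hY
      set S := {α | α < omega1 ∧ ∃ n : ℕ, X ∩ Set.Iio α = ht '' (Dt (E α n))} with hS
      by_contra hnot
      apply hDt Y
      refine InNS_mono ?_ ((hchar S (fun o ho => ho.1)).mpr hnot)
      intro t htmem
      have hαlt : ht t < omega1 := hΩ.1 t
      obtain ⟨n, hn⟩ : ∃ n, E (ht t) n = t := by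
        have htmem' : t ∈ Set.range (E (ht t)) := by
          rw [← hE (ht t) hαlt]
          simp only [Set.mem_setOf_eq]
        exact htmem'
      refine ⟨hαlt, n, ?_⟩
      rw [hn, ← htmem]
      ext β
      constructor
      · rintro ⟨hβX, hβlt⟩
        obtain ⟨s, hst, hsht⟩ := hht.2 t β hβlt
        have hsY : s ∈ Y := by
          rw [hY]
          simp only [Set.mem_setOf_eq, hsht]
          exact hβX
        exact ⟨s, ⟨hsY, hst⟩, hsht⟩
      · rintro ⟨s, ⟨hsY, hst⟩, rfl⟩
        exact ⟨hsY, hht.1 s t hst⟩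
    -- the Kunen argument
    by_contra hnd
    rw [DiamondOn] at hnd
    push_neg at hnd
    set Dcand : ℕ → ℕ → Ordinal → Set Ordinal := fun n m α =>
      {ξ | ξ < α ∧ Ordinal.omega0 * ξ + (pind n m : Ordinal) ∈ ht '' (Dt (E α n))}
      with hDcand
    have hfail : ∀ n m : ℕ, ∃ X, X ⊆ Set.Iio omega1 ∧ ∃ C, IsClubIn C ∧
        {o ∈ Set.Iio omega1 | X ∩ Set.Iio o = Dcand n m o} ∩ C = ∅ := by
      intro n m
      obtain ⟨X, hX1, hX2⟩ := hnd (Dcand n m) (fun o _ ξ hξ => hξ.1)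
      rw [IsStationaryIn] at hX2
      push_neg at hX2
      obtain ⟨C, hC1, hC2⟩ := hX2
      exact ⟨X, hX1, C, hC1, hC2⟩
    choose Xf hXf Cf hCf hdisj using hfail
    set Ystar : Set Ordinal := ⋃ (n : ℕ) (m : ℕ),
      (fun ξ => Ordinal.omega0 * ξ + (pind n m : Ordinal)) '' (Xf n m) with hYstar
    have hCstar : IsClubIn (Ccl ∩ ⋂ k : ℕ, Cf (Nat.unpair k).1 (Nat.unpair k).2) :=
      club_inter Ccl_club (club_iInter _ (fun k => hCf _ _))
    obtain ⟨α, ⟨hα1, n₀, heq⟩, hαCcl, hαiInt⟩ := hguess Ystar _ hCstar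
    set m := 2*n₀+1 with hm
    have hπ : pind n₀ m = m := pind_fixed n₀
    have hclaim : Xf n₀ m ∩ Set.Iio α = Dcand n₀ m α := by
      ext ξ
      simp only [Set.mem_inter_iff, Set.mem_Iio, hDcand, Set.mem_setOf_eq]
      constructor
      · rintro ⟨hξX, hξα⟩
        refine ⟨hξα, ?_⟩
        rw [← heq]
        constructor
        · exact Set.mem_iUnion.mpr ⟨n₀, Set.mem_iUnion.mpr ⟨m, ⟨ξ, hξX, rfl⟩⟩⟩
        · calc Ordinal.omega0 * ξ + (pind n₀ m : Ordinal)
              < Ordinal.omega0 * ξ + Ordinal.omega0 :=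
                add_lt_add_right (Ordinal.nat_lt_omega0 _) _
          _ ≤ α := hαCcl.2 ξ hξα
      · rintro ⟨hξα, hmem⟩
        rw [← heq] at hmem
        obtain ⟨hY, _⟩ := hmem
        obtain ⟨n', hn'⟩ := Set.mem_iUnion.mp hY
        obtain ⟨m', hm'⟩ := Set.mem_iUnion.mp hn'
        obtain ⟨ξ', hξ', heqq⟩ := hm'
        obtain ⟨hξeq, hpeq⟩ := omega_mul_add_inj heqq
        obtain ⟨hne, hme⟩ := pind_inj hpeq
        rw [hξeq, hne, hme] at hξ'
        exact ⟨hξ', hξα⟩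
    have hαmem : α ∈ {o ∈ Set.Iio omega1 | Xf n₀ m ∩ Set.Iio o = Dcand n₀ m o} ∩ Cf n₀ m := by
      refine ⟨⟨hα1, hclaim⟩, ?_⟩
      have := Set.mem_iInter.mp hαiInt (Nat.pair n₀ m)
      rwa [Nat.unpair_pair] at this
    rw [hdisj n₀ m] at hαmem
    exact hαmem




/-- Let `T` be a nonspecial `ω₁`-tree such that for every `X ⊆ ω₁`,
`T ↾ X ∈ NS^T` if and only if `X` is nonstationary in `ω₁`. Then `◊` and `◊_T`
are equivalent. -/
theorem stmt16 {T : Type*} [PartialOrder T] [OrderBot T]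
    (hchain : PredsChain T) (ht : T → Ordinal)
    (hht : IsHeightFun ht) (hΩ : HeightOmega1 ht) (hlev : CountableLevels ht)
    (hns : ¬ IsSpecialSet (Set.univ : Set T))
    (hchar : ∀ X : Set Ordinal, X ⊆ Set.Iio omega1 →
      (InNS {t : T | ht t ∈ X} ↔ ¬ IsStationaryIn X)) :
    DiamondOn (Set.Iio omega1) ↔ DiamondTree T := by
  exact diamondOn_univ_iff.trans (stmt16_main ht hht hΩ hlev hchar)
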